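/- Let F be an AL-RNN and let s be a sign pattern such that the matrix A + W·D_s, viewed as a complex matrix, has no eigenvalue of absolute value 1. Let z_n = F^n(z_0) be an orbit that is bounded and satisfies z_n ∈ U_s for all n ≥ N for some N. Then the affine map G_s(z) = (A + W·D_s) z + h has a unique fixed point z* = (I − A − W·D_s)⁻¹ h, the orbit converges to z*, and z* is a fixed point of F, i.e., F(z*) = z*. -/

import Mathlib

open Matrix Filter Topology

/-- `Φ*`: identity on the first `M − P` coordinates, ReLU on the last `P` coordinates. -/
noncomputable def phiStar (M P : ℕ) (z : Fin M → ℝ) : Fin M → ℝ :=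
  fun j => if (j : ℕ) < M - P then z j else max 0 (z j)

/-- The AL-RNN map `F(z) = A z + W Φ*(z) + h`. -/
noncomputable def alrnn (M P : ℕ) (A W : Matrix (Fin M) (Fin M) ℝ) (h : Fin M → ℝ)
    (z : Fin M → ℝ) : Fin M → ℝ :=
  A.mulVec z + W.mulVec (phiStar M P z) + h

/-- The diagonal matrix `D_s` attached to a sign pattern `s : Fin P → Fin 2`: its first
`M − P` diagonal entries are `1` and the `(M − P + i)`-th diagonal entry is `s i`. -/
noncomputable def signDiag (M P : ℕ) (s : Fin P → Fin 2) : Matrix (Fin M) (Fin M) ℝ :=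
  Matrix.diagonal fun j =>
    if (j : ℕ) < M - P then 1
    else if hj : (j : ℕ) - (M - P) < P then ((s ⟨(j : ℕ) - (M - P), hj⟩ : ℕ) : ℝ) else 0

/-- The open linear subregion `U_s`: the `(M − P + i)`-th coordinate is `> 0` if
`s i = 1` and `< 0` if `s i = 0`. -/
def regionOpen (M P : ℕ) (hPM : P ≤ M) (s : Fin P → Fin 2) : Set (Fin M → ℝ) :=
  { z | ∀ i : Fin P,
      if s i = 1 then 0 < z ⟨M - P + (i : ℕ), by omega⟩
      else z ⟨M - P + (i : ℕ), by omega⟩ < 0 }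

/-- The closed linear subregion: the sign conditions of `s` hold non-strictly. -/
def regionClosed (M P : ℕ) (hPM : P ≤ M) (s : Fin P → Fin 2) : Set (Fin M → ℝ) :=
  { z | ∀ i : Fin P,
      if s i = 1 then 0 ≤ z ⟨M - P + (i : ℕ), by omega⟩
      else z ⟨M - P + (i : ℕ), by omega⟩ ≤ 0 }

/-- Core analytic lemma: if every eigenvalue of an endomorphism of a finite-dimensional
complex normed space has norm `< 1`, then all orbits tend to `0`. -/
lemma aux_tendsto_pow_apply {V : Type*} [NormedAddCommGroup V] [NormedSpace ℂ V]
    [FiniteDimensional ℂ V] (g : Module.End ℂ V)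
    (hg : ∀ μ : ℂ, g.HasEigenvalue μ → ‖μ‖ < 1) (x : V) :
    Tendsto (fun n => (g ^ n) x) atTop (𝓝 0) := by
  have hx : x ∈ ⨆ μ : ℂ, g.maxGenEigenspace μ := by
    rw [Module.End.iSup_maxGenEigenspace_eq_top]; trivial
  refine Submodule.iSup_induction (motive := fun v => Tendsto (fun n => (g ^ n) v) atTop (𝓝 0))
    _ hx ?_ (by simpa using (tendsto_const_nhds : Tendsto (fun _ : ℕ => (0:V)) atTop _)) ?_
  · intro μ v hv
    by_cases hv0 : v = 0
    · simpa [hv0] using (tendsto_const_nhds : Tendsto (fun _ : ℕ => (0:V)) atTop (𝓝 0))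
    obtain ⟨k, hk⟩ := (Module.End.mem_maxGenEigenspace g μ v).mp hv
    have hμ : ‖μ‖ < 1 := by
      refine hg μ (Module.End.hasEigenvalue_of_hasGenEigenvalue (k := k) ?_)
      rw [Module.End.hasGenEigenvalue_iff]
      intro hbot
      have hmem : v ∈ g.genEigenspace μ k := Module.End.mem_genEigenspace_nat.mpr hk
      rw [hbot] at hmem
      exact hv0 ((Submodule.mem_bot ℂ).mp hmem)
    set N : Module.End ℂ V := g - μ • 1 with hN
    have hgv : ∀ n, (g ^ n) v =
        ∑ j ∈ Finset.range (n + 1), ((n.choose j : ℂ) * μ ^ (n - j)) • ((N ^ j) v) := by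
      intro n
      have hcomm : Commute N (μ • (1 : Module.End ℂ V)) := (Commute.one_right N).smul_right μ
      have hrw : g ^ n = ∑ j ∈ Finset.range (n + 1),
          N ^ j * (μ • (1 : Module.End ℂ V)) ^ (n - j) * (n.choose j : Module.End ℂ V) := by
        conv_lhs => rw [show g = N + μ • 1 by rw [hN]; abel]
        exact Commute.add_pow hcomm n
      rw [hrw, LinearMap.sum_apply]
      refine Finset.sum_congr rfl fun j hj => ?_
      have h1 : ((μ • (1 : Module.End ℂ V)) ^ (n - j)) = μ ^ (n - j) • (1 : Module.End ℂ V) := by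
        rw [smul_pow, one_pow]
      rw [Module.End.mul_apply, Module.End.mul_apply, Module.End.natCast_apply, h1,
        LinearMap.smul_apply, Module.End.one_apply, _root_.map_smul, map_nsmul,
        mul_smul, Nat.cast_smul_eq_nsmul ℂ, smul_comm]
    have hzero : ∀ j, k ≤ j → (N ^ j) v = 0 := by
      intro j hj
      have h2 : N ^ j = N ^ (j - k) * N ^ k := by rw [← pow_add]; congr 1; omega
      rw [h2, Module.End.mul_apply, hk, map_zero]
    have hkey : ∀ n, k ≤ n → (g ^ n) v =
        ∑ j ∈ Finset.range k, ((n.choose j : ℂ) * μ ^ (n - j)) • ((N ^ j) v) := by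
      intro n hn
      rw [hgv n]
      refine (Finset.sum_subset (Finset.range_subset_range.mpr (by omega)) ?_).symm
      intro j _ hjk
      rw [hzero j (by simpa using hjk)]
      simp
    have hterm : ∀ j : ℕ, Tendsto (fun n : ℕ => ((n.choose j : ℂ) * μ ^ (n - j)) • ((N ^ j) v))
        atTop (𝓝 0) := by
      intro j
      set r : ℝ := (1 + ‖μ‖) / 2 with hr
      have hr0 : 0 < r := by positivity
      have hμr : ‖μ‖ ≤ r := by rw [hr]; linarith
      have hr1 : r < 1 := by rw [hr]; linarith
      have hb : Tendsto (fun n : ℕ => ((n : ℝ) ^ j * r ^ n) * (‖(N ^ j) v‖ / r ^ j))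
          atTop (𝓝 0) := by
        have hs := (summable_pow_mul_geometric_of_norm_lt_one (R := ℝ) j
          (r := r) (by rwa [Real.norm_eq_abs, abs_of_pos hr0])).tendsto_atTop_zero
        simpa using hs.mul_const (‖(N ^ j) v‖ / r ^ j)
      refine squeeze_zero_norm' ?_ hb
      filter_upwards [eventually_ge_atTop j] with n hn
      have h1 : ‖((n.choose j : ℂ) * μ ^ (n - j)) • ((N ^ j) v)‖
          = (n.choose j : ℝ) * ‖μ‖ ^ (n - j) * ‖(N ^ j) v‖ := by
        rw [norm_smul, norm_mul, norm_pow]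
        simp
      rw [h1]
      have h2 : (n.choose j : ℝ) ≤ (n : ℝ) ^ j := by exact_mod_cast Nat.choose_le_pow n j
      have h3 : ‖μ‖ ^ (n - j) ≤ r ^ (n - j) := pow_le_pow_left₀ (norm_nonneg μ) hμr _
      have h4 : r ^ (n - j) = r ^ n / r ^ j := by
        rw [eq_div_iff (by positivity), ← pow_add]; congr 1; omega
      calc (n.choose j : ℝ) * ‖μ‖ ^ (n - j) * ‖(N ^ j) v‖
          ≤ ((n : ℝ) ^ j * (r ^ n / r ^ j)) * ‖(N ^ j) v‖ := by
            apply mul_le_mul_of_nonneg_right _ (norm_nonneg _)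
            exact mul_le_mul h2 (h3.trans_eq h4) (by positivity) (by positivity)
        _ = ((n : ℝ) ^ j * r ^ n) * (‖(N ^ j) v‖ / r ^ j) := by ring
    have hsum := tendsto_finset_sum (Finset.range k) fun j _ => hterm j
    rw [Finset.sum_const_zero] at hsum
    refine Tendsto.congr' ?_ hsum
    filter_upwards [eventually_ge_atTop k] with n hn
    exact (hkey n hn).symm
  · intro a b ha hb
    have := ha.add hb
    simp only [map_add] at this ⊢
    simpa using this

/-- If an orbit of an AL-RNN is bounded and eventually stays in a single
open subregion `U_s` whose matrix `A + W·D_s` has no complex eigenvalue of absolute value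
1, then the affine map `G_s(w) = (A + W·D_s) w + h` has the unique fixed point
`z* = (I − A − W·D_s)⁻¹ h`, the orbit converges to `z*`, and `z*` is a fixed point of the
AL-RNN itself. -/
theorem stmt1 (M P : ℕ) (hM : 1 ≤ M) (hP : 1 ≤ P) (hPM : P ≤ M)
    (A W : Matrix (Fin M) (Fin M) ℝ) (hA : A.IsDiag) (h : Fin M → ℝ)
    (s : Fin P → Fin 2)
    (hhyp : ∀ μ ∈ spectrum ℂ (((A + W * signDiag M P s)).map Complex.ofReal),
      ‖μ‖ ≠ 1)
    (z : ℕ → Fin M → ℝ) (horb : ∀ n : ℕ, z (n + 1) = alrnn M P A W h (z n))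
    (hbdd : Bornology.IsBounded (Set.range z))
    (N : ℕ) (hreg : ∀ n ≥ N, z n ∈ regionOpen M P hPM s) :
    ∀ zs : Fin M → ℝ, zs = (1 - (A + W * signDiag M P s))⁻¹.mulVec h →
      ((A + W * signDiag M P s).mulVec zs + h = zs ∧
        (∀ w : Fin M → ℝ, (A + W * signDiag M P s).mulVec w + h = w → w = zs) ∧
        Tendsto z atTop (𝓝 zs) ∧
        alrnn M P A W h zs = zs) := by
  intro zs hzs
  set B : Matrix (Fin M) (Fin M) ℝ := A + W * signDiag M P s with hB
  -- region facts
  have hsub : regionOpen M P hPM s ⊆ regionClosed M P hPM s := by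
    intro x hx i
    have hxi := hx i
    by_cases hsi : s i = 1
    · rw [if_pos hsi] at hxi ⊢; exact le_of_lt hxi
    · rw [if_neg hsi] at hxi ⊢; exact le_of_lt hxi
  have hphi : ∀ x ∈ regionClosed M P hPM s, phiStar M P x = (signDiag M P s).mulVec x := by
    intro x hx
    funext j
    rw [signDiag, Matrix.mulVec_diagonal]
    by_cases hj : (j : ℕ) < M - P
    · simp [phiStar, hj]
    · have hj2 : (j : ℕ) - (M - P) < P := by omega
      have hidx : (⟨M - P + ((⟨(j : ℕ) - (M - P), hj2⟩ : Fin P) : ℕ), by omega⟩ : Fin M) = j := by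
        apply Fin.ext; simp; omega
      have hxj := hx ⟨(j : ℕ) - (M - P), hj2⟩
      rw [hidx] at hxj
      simp only [phiStar, if_neg hj]
      rw [dif_pos hj2]
      have h01 : s ⟨(j : ℕ) - (M - P), hj2⟩ = 0 ∨ s ⟨(j : ℕ) - (M - P), hj2⟩ = 1 := by
        have hlt := (s ⟨(j : ℕ) - (M - P), hj2⟩).isLt
        have : (s ⟨(j : ℕ) - (M - P), hj2⟩ : ℕ) = 0 ∨ (s ⟨(j : ℕ) - (M - P), hj2⟩ : ℕ) = 1 := by
          omega
        rcases this with h0 | h1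
        · left; exact Fin.ext h0
        · right; exact Fin.ext h1
      rcases h01 with h0 | h1
      · rw [h0] at hxj ⊢
        rw [if_neg (by decide)] at hxj
        simpa using max_eq_left hxj
      · rw [h1] at hxj ⊢
        rw [if_pos rfl] at hxj
        simpa using max_eq_right hxj
  have halrnn : ∀ x ∈ regionClosed M P hPM s, alrnn M P A W h x = B.mulVec x + h := by
    intro x hx
    rw [alrnn, hphi x hx, Matrix.mulVec_mulVec, hB, Matrix.add_mulVec]
  -- invertibility of 1 - B over ℝ
  have hdet : IsUnit (1 - B).det := by
    have h1 : (1 : ℂ) ∉ spectrum ℂ (B.map Complex.ofReal) := fun hmem => hhyp 1 hmem (by simp)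
    have h2 : IsUnit ((1 : Matrix (Fin M) (Fin M) ℂ) - B.map Complex.ofReal) := by
      by_contra hc
      exact h1 (by rw [spectrum.mem_iff, _root_.map_one]; exact hc)
    have h3 : ((1 : Matrix (Fin M) (Fin M) ℂ) - B.map Complex.ofReal)
        = (1 - B).map Complex.ofReal := by
      ext i j
      by_cases hij : i = j <;>
        simp [Matrix.map_apply, Matrix.one_apply, Matrix.sub_apply, hij]
    have h4 : IsUnit ((1 - B).map Complex.ofReal).det :=
      (Matrix.isUnit_iff_isUnit_det _).mp (h3 ▸ h2)
    rw [isUnit_iff_ne_zero]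
    intro h0
    have h5 : (((1 - B).det : ℝ) : ℂ) = ((1 - B).map Complex.ofReal).det := by
      have := RingHom.map_det Complex.ofRealHom (1 - B)
      simp only [RingHom.mapMatrix_apply] at this
      exact this
    rw [← h5, h0] at h4
    simp at h4
  have hinv1 : (1 - B) * (1 - B)⁻¹ = 1 := Matrix.mul_nonsing_inv _ hdet
  have hinv2 : (1 - B)⁻¹ * (1 - B) = 1 := Matrix.nonsing_inv_mul _ hdet
  have hfix : B.mulVec zs + h = zs := by
    have h1 : (1 - B).mulVec zs = h := by
      rw [hzs, Matrix.mulVec_mulVec, hinv1, Matrix.one_mulVec]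
    rw [Matrix.sub_mulVec, Matrix.one_mulVec] at h1
    rw [← h1]; abel
  have huniq : ∀ w : Fin M → ℝ, B.mulVec w + h = w → w = zs := by
    intro w hw
    have h1 : (1 - B).mulVec w = h := by
      calc (1 - B).mulVec w = w - B.mulVec w := by
            rw [Matrix.sub_mulVec, Matrix.one_mulVec]
        _ = (B.mulVec w + h) - B.mulVec w := by rw [hw]
        _ = h := by abel
    have h2 := congrArg (fun v => (1 - B)⁻¹.mulVec v) h1
    simpa [Matrix.mulVec_mulVec, hinv2, Matrix.one_mulVec, ← hzs] using h2
  -- the orbit eventually satisfies the affine recursion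
  have hreg' : ∀ n ≥ N, z (n + 1) = B.mulVec (z n) + h := fun n hn => by
    rw [horb n, halrnn _ (hsub (hreg n hn))]
  set e : ℕ → Fin M → ℝ := fun n => z (N + n) - zs with he
  have he1 : ∀ n, e (n + 1) = B.mulVec (e n) := by
    intro n
    show z (N + (n + 1)) - zs = B.mulVec (z (N + n) - zs)
    have hz1 : z (N + n + 1) = B.mulVec (z (N + n)) + h := hreg' (N + n) (Nat.le_add_right N n)
    rw [show N + (n + 1) = N + n + 1 from rfl, hz1, Matrix.mulVec_sub]
    conv_lhs => rw [← hfix]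
    abel
  have he2 : ∀ n, e n = (B ^ n).mulVec (e 0) := by
    intro n
    induction n with
    | zero => simp [Matrix.one_mulVec]
    | succ n ih => rw [he1 n, ih, Matrix.mulVec_mulVec, ← pow_succ']
  obtain ⟨C, hC⟩ := isBounded_iff_forall_norm_le.mp hbdd
  have heC : ∀ n, ‖e n‖ ≤ C + ‖zs‖ := by
    intro n
    have hz2 := hC (z (N + n)) (Set.mem_range_self _)
    calc ‖e n‖ = ‖z (N + n) - zs‖ := rfl
      _ ≤ ‖z (N + n)‖ + ‖zs‖ := norm_sub_le _ _
      _ ≤ C + ‖zs‖ := by linarith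
  -- complexification
  set c : (Fin M → ℝ) → (Fin M → ℂ) := fun v j => (v j : ℂ) with hc
  set Bc : Matrix (Fin M) (Fin M) ℂ := B.map Complex.ofReal with hBc
  set T : Module.End ℂ (Fin M → ℂ) := Matrix.toLinAlgEquiv' Bc with hT
  have hTpow : ∀ (n : ℕ) (v : Fin M → ℂ), (T ^ n) v = (Bc ^ n).mulVec v := by
    intro n v
    rw [hT, ← map_pow, Matrix.toLinAlgEquiv'_apply]
  have hmapVec : ∀ (Q : Matrix (Fin M) (Fin M) ℝ) (v : Fin M → ℝ),
      (Q.map Complex.ofReal).mulVec (c v) = c (Q.mulVec v) := by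
    intro Q v
    funext i
    exact (RingHom.map_mulVec Complex.ofRealHom Q v i).symm
  have hBcpow : ∀ n : ℕ, Bc ^ n = (B ^ n).map Complex.ofReal := by
    intro n
    induction n with
    | zero =>
        rw [pow_zero, pow_zero]
        exact (_root_.Matrix.map_one _ Complex.ofReal_zero Complex.ofReal_one).symm
    | succ n ih =>
        rw [pow_succ, pow_succ, ih, hBc]
        exact (_root_.Matrix.map_mul (f := Complex.ofRealHom)).symm
  have hTce : ∀ n : ℕ, (T ^ n) (c (e 0)) = c (e n) := by
    intro n
    rw [hTpow, hBcpow, hmapVec, ← he2 n]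
  -- the bounded-orbit submodule
  let V : Submodule ℂ (Fin M → ℂ) :=
    { carrier := {v | ∃ C0 : ℝ, ∀ n : ℕ, ‖(T ^ n) v‖ ≤ C0}
      add_mem' := by
        rintro a b ⟨Ca, hCa⟩ ⟨Cb, hCb⟩
        exact ⟨Ca + Cb, fun n => by
          rw [map_add]
          exact (norm_add_le _ _).trans (add_le_add (hCa n) (hCb n))⟩
      zero_mem' := ⟨0, fun n => by simp⟩
      smul_mem' := by
        rintro a v ⟨C0, hC0⟩
        exact ⟨‖a‖ * C0, fun n => by
          rw [_root_.map_smul, norm_smul]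
          exact mul_le_mul_of_nonneg_left (hC0 n) (norm_nonneg a)⟩ }
  have hmemV : ∀ v : Fin M → ℂ, v ∈ V ↔ ∃ C0 : ℝ, ∀ n : ℕ, ‖(T ^ n) v‖ ≤ C0 :=
    fun v => Iff.rfl
  have hTV : ∀ v ∈ V, T v ∈ V := by
    intro v hv
    obtain ⟨C0, hC0⟩ := (hmemV v).mp hv
    refine (hmemV _).mpr ⟨C0, fun n => ?_⟩
    rw [← Module.End.mul_apply, ← pow_succ]
    exact hC0 (n + 1)
  set g : Module.End ℂ V := T.restrict hTV with hg
  have hgval : ∀ (n : ℕ) (x : V), (((g ^ n) x : V) : Fin M → ℂ) = (T ^ n) (x : Fin M → ℂ) := by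
    intro n
    induction n with
    | zero => intro x; simp
    | succ n ih =>
        intro x
        rw [pow_succ', pow_succ', Module.End.mul_apply, Module.End.mul_apply]
        have : ((g ((g ^ n) x) : V) : Fin M → ℂ) = T (((g ^ n) x : V) : Fin M → ℂ) := rfl
        rw [this, ih]
  have hgE : ∀ μ : ℂ, g.HasEigenvalue μ → ‖μ‖ < 1 := by
    intro μ hμ
    obtain ⟨x, hx⟩ := hμ.exists_hasEigenvector
    have hxv : T (x : Fin M → ℂ) = μ • (x : Fin M → ℂ) := by
      have h1 : g x = μ • x := hx.apply_eq_smul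
      have h2 := congrArg (Subtype.val) h1
      exact h2
    have hx0 : (x : Fin M → ℂ) ≠ 0 := by
      simpa [Submodule.coe_eq_zero] using hx.right
    have hpow : ∀ n : ℕ, (T ^ n) (x : Fin M → ℂ) = μ ^ n • (x : Fin M → ℂ) := by
      intro n
      induction n with
      | zero => simp
      | succ n ih =>
          rw [pow_succ, Module.End.mul_apply, hxv, _root_.map_smul, ih, smul_smul, ← pow_succ']
    obtain ⟨C0, hC0⟩ := (hmemV _).mp x.2
    have hxpos : 0 < ‖(x : Fin M → ℂ)‖ := norm_pos_iff.mpr hx0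
    have hle : ‖μ‖ ≤ 1 := by
      by_contra hgt
      push_neg at hgt
      obtain ⟨n, hn⟩ := pow_unbounded_of_one_lt (C0 / ‖(x : Fin M → ℂ)‖) hgt
      have h5 := hC0 n
      rw [hpow n, norm_smul, norm_pow] at h5
      have h6 : ‖μ‖ ^ n ≤ C0 / ‖(x : Fin M → ℂ)‖ := (le_div_iff₀ hxpos).mpr h5
      linarith
    have hne : ‖μ‖ ≠ 1 := by
      intro h1
      have hev : T.HasEigenvalue μ :=
        Module.End.hasEigenvalue_of_hasEigenvector
          ⟨Module.End.mem_eigenspace_iff.mpr hxv, hx0⟩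
      have hspec : μ ∈ spectrum ℂ T := Module.End.hasEigenvalue_iff_mem_spectrum.mp hev
      rw [hT, AlgEquiv.spectrum_eq] at hspec
      exact hhyp μ hspec h1
    exact lt_of_le_of_ne hle hne
  -- the complexified initial error lies in V
  have hnormc : ∀ v : Fin M → ℝ, ‖c v‖ = ‖v‖ := by
    intro v
    rw [Pi.norm_def, Pi.norm_def]
    congr 1
    refine Finset.sup_congr rfl fun i _ => ?_
    simp [hc]
  have hvc : c (e 0) ∈ V := by
    refine (hmemV _).mpr ⟨C + ‖zs‖, fun n => ?_⟩
    rw [hTce n, hnormc]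
    exact heC n
  -- convergence of the error to 0
  have hconv : Tendsto (fun n => (T ^ n) (c (e 0))) atTop (𝓝 0) := by
    have h0 := aux_tendsto_pow_apply g hgE ⟨c (e 0), hvc⟩
    have h2 : Tendsto (fun n => (((g ^ n) (⟨c (e 0), hvc⟩ : V) : V) : Fin M → ℂ))
        atTop (𝓝 0) := by
      have hcont : Continuous (Subtype.val : V → (Fin M → ℂ)) := continuous_subtype_val
      simpa [Function.comp_def] using (hcont.tendsto 0).comp h0
    refine h2.congr fun n => ?_
    rw [hgval]
  have hconvE : Tendsto e atTop (𝓝 0) := by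
    rw [tendsto_pi_nhds]
    intro j
    have h1 : Tendsto (fun n => (T ^ n) (c (e 0)) j) atTop (𝓝 0) := by
      have h2 := ((continuous_apply j).tendsto (0 : Fin M → ℂ)).comp hconv
      simpa [Function.comp_def] using h2
    have h3 : Tendsto (fun n => ((e n j : ℝ) : ℂ)) atTop (𝓝 0) := by
      refine h1.congr fun n => ?_
      rw [hTce n]
    have h4 := (Complex.continuous_re.tendsto 0).comp h3
    simpa [Function.comp_def] using h4
  have hzconv : Tendsto z atTop (𝓝 zs) := by
    have h1 : Tendsto (fun n => z (N + n)) atTop (𝓝 zs) := by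
      have h2 := hconvE.add_const zs
      rw [zero_add] at h2
      refine h2.congr fun n => ?_
      show z (N + n) - zs + zs = z (N + n)
      abel
    have h2 : Tendsto (fun n => z (n + N)) atTop (𝓝 zs) := by
      refine h1.congr fun n => ?_
      rw [Nat.add_comm]
    exact (tendsto_add_atTop_iff_nat N).mp h2
  -- zs lies in the closed region, hence is a fixed point of the AL-RNN
  have hclosed : IsClosed (regionClosed M P hPM s) := by
    have hEq : regionClosed M P hPM s = ⋂ i : Fin P, {x : Fin M → ℝ |
        if s i = 1 then 0 ≤ x ⟨M - P + (i : ℕ), by omega⟩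
        else x ⟨M - P + (i : ℕ), by omega⟩ ≤ 0} := by
      ext x
      simp only [regionClosed, Set.mem_setOf_eq, Set.mem_iInter]
    rw [hEq]
    refine isClosed_iInter fun i => ?_
    by_cases hsi : s i = 1
    · simp only [if_pos hsi]
      exact isClosed_le continuous_const (continuous_apply _)
    · simp only [if_neg hsi]
      exact isClosed_le (continuous_apply _) continuous_const
  have hzsreg : zs ∈ regionClosed M P hPM s :=
    hclosed.mem_of_tendsto hzconv (eventually_atTop.mpr ⟨N, fun n hn => hsub (hreg n hn)⟩)
  exact ⟨hfix, huniq, hzconv, by rw [halrnn zs hzsreg]; exact hfix⟩
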